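/- For all n, m, h ≥ 1: if an inverse semigroup (S,·,⁻¹) satisfies the semigroup identity v_{n,m}^{(h)} ≈ (v_{n,m}^{(h)})², then it satisfies the inverse semigroup identity w_n^{(h)} ≈ (w_n^{(h)})². -/

import Mathlib

universe u v

/-- An inverse semigroup: every element has a unique (generalized) inverse. -/
class InverseSemigroup (S : Type*) extends Semigroup S, Inv S where
  mul_inv_mul : ∀ x : S, x * x⁻¹ * x = x
  inv_mul_inv : ∀ x : S, x⁻¹ * x * x⁻¹ = x⁻¹
  inv_unique : ∀ x y : S, x * y * x = x → y * x * y = y → y = x⁻¹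

/-- Evaluation of a (nonempty) word, given as a list of variables, in a magma with an
explicit binary operation; the empty word evaluates to `none`. -/
def wEval {ι S : Type*} (mul : S → S → S) (ρ : ι → S) : List ι → Option S
  | [] => none
  | a :: l => some (l.foldl (fun s i => mul s (ρ i)) (ρ a))

/-- The word `u_{n,k,m} = x₁⋯x_{n+k}(xₙ⋯x₁·x_{n+1}⋯x_{n+k})^{2m-1}` (variables 0-indexed). -/
def uWord (n k m : ℕ) : List ℕ :=
  List.range (n + k) ++
    (List.replicate (2 * m - 1) ((List.range n).reverse ++ List.range' n k)).flatten

/-- The words `v_{n,m}^{(h)}` (`h ≥ 1`), over variables indexed by `h`-tuples from `{0,…,2n-1}`: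
`v_{n,m}^{(1)} = u_{n,n,m}`, and `v_{n,m}^{(h+1)}` is obtained by substituting, for the `j`-th
variable of `v_{n,m}^{(1)}`, the copy of `v_{n,m}^{(h)}` whose variables get `j` appended. -/
def vWord (n m : ℕ) : ℕ → List (List ℕ)
  | 0 => []
  | 1 => (uWord n n m).map (fun i => [i])
  | h + 2 => (uWord n n m).flatMap (fun j => (vWord n m (h + 1)).map (fun xs => xs ++ [j]))

/-- Formal inverse of a word in letters `(variable, inverted?)`. -/
def invFree (w : List (List ℕ × Bool)) : List (List ℕ × Bool) :=
  w.reverse.map (fun p => (p.1, !p.2))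

/-- The letter sequence of the `{·,⁻¹}`-term `w_n^{(h)}` (`h ≥ 1`), letters being pairs
`(variable, inverted?)` with variables indexed by `h`-tuples from `{0,…,n-1}`. -/
def wLetters (n : ℕ) : ℕ → List (List ℕ × Bool)
  | 0 => []
  | 1 => (List.range n).map (fun i => ([i], false)) ++ (List.range n).map (fun i => ([i], true))
  | h + 2 =>
    ((List.range n).map (fun j => (wLetters n (h + 1)).map (fun p => (p.1 ++ [j], p.2)))).flatten
      ++ ((List.range n).map
        (fun j => invFree ((wLetters n (h + 1)).map (fun p => (p.1 ++ [j], p.2))))).flatten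

/-- Evaluation of a (nonempty) word in letters `(variable, inverted?)`, with explicit
multiplication and inversion operations; the empty word evaluates to `none`. -/
def letterEval {S : Type*} (mul : S → S → S) (inv : S → S) (ρ : List ℕ → S) :
    List (List ℕ × Bool) → Option S
  | [] => none
  | p :: l =>
    some (l.foldl (fun s q => mul s (if q.2 then inv (ρ q.1) else ρ q.1))
      (if p.2 then inv (ρ p.1) else ρ p.1))

namespace ISAux


open InverseSemigroup

variable {S : Type u} [InverseSemigroup S]

lemma inv_invIS (x : S) : x⁻¹⁻¹ = x :=
  (inv_unique x⁻¹ x (inv_mul_inv x) (mul_inv_mul x)).symm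

lemma idem_inv' {e : S} (he : e * e = e) : e⁻¹ = e := by
  have := inv_unique e e (by rw [he, he]) (by rw [he, he])
  exact this.symm

lemma mul_idem {e f : S} (he : e * e = e) (hf : f * f = f) : (e * f) * (e * f) = e * f := by
  set a := (e * f)⁻¹ with ha
  have he' : ∀ x : S, e * (e * x) = e * x := fun x => by rw [← mul_assoc, he]
  have hf' : ∀ x : S, f * (f * x) = f * x := fun x => by rw [← mul_assoc, hf]
  have h1 : e * f * a * (e * f) = e * f := mul_inv_mul _
  have h2 : a * (e * f) * a = a := inv_mul_inv _
  have h2' : ∀ x : S, a * (e * (f * (a * x))) = a * x := fun x => by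
    have := congrArg (· * x) h2
    simp only [mul_assoc] at this
    exact this
  have c1 : (e * f) * (f * a * e) * (e * f) = e * f := by
    simp only [mul_assoc] at h1 ⊢
    simp only [he', hf']
    exact h1
  have c2 : (f * a * e) * (e * f) * (f * a * e) = f * a * e := by
    simp only [mul_assoc]
    simp only [he', hf', h2']
  have key : f * a * e = a := inv_unique (e * f) (f * a * e) c1 c2
  have haa : a * a = a := by
    conv_lhs => rw [← key]
    simp only [mul_assoc, he', hf', h2']
    rw [← mul_assoc, key]
  have hea : e * f = a := by
    rw [← idem_inv' haa, ha]
    exact (inv_invIS _).symm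
  rw [hea]; exact haa

lemma idem_comm {e f : S} (he : e * e = e) (hf : f * f = f) : e * f = f * e := by
  have he' : ∀ x : S, e * (e * x) = e * x := fun x => by rw [← mul_assoc, he]
  have hf' : ∀ x : S, f * (f * x) = f * x := fun x => by rw [← mul_assoc, hf]
  have hef := mul_idem he hf
  have hfe := mul_idem hf he
  have h1 : (e * f) * (f * e) * (e * f) = e * f := by
    simp only [mul_assoc] at hef ⊢
    simp only [he', hf']
    exact hef
  have h2 : (f * e) * (e * f) * (f * e) = f * e := by
    simp only [mul_assoc] at hfe ⊢
    simp only [he', hf']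
    exact hfe
  have := inv_unique (e * f) (f * e) h1 h2
  rw [this, idem_inv' hef]

lemma mul_inv_rev' (x y : S) : (x * y)⁻¹ = y⁻¹ * x⁻¹ := by
  have hyy : (y * y⁻¹) * (y * y⁻¹) = y * y⁻¹ := by rw [← mul_assoc, mul_inv_mul]
  have hix : (x⁻¹ * x) * (x⁻¹ * x) = x⁻¹ * x := by rw [← mul_assoc, inv_mul_inv]
  have comm : (y * y⁻¹) * (x⁻¹ * x) = (x⁻¹ * x) * (y * y⁻¹) := idem_comm hyy hix
  have c1 : (x * y) * (y⁻¹ * x⁻¹) * (x * y) = x * y := by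
    calc (x * y) * (y⁻¹ * x⁻¹) * (x * y) = x * ((y * y⁻¹) * (x⁻¹ * x)) * y := by
          simp only [mul_assoc]
      _ = x * ((x⁻¹ * x) * (y * y⁻¹)) * y := by rw [comm]
      _ = (x * x⁻¹ * x) * (y * y⁻¹ * y) := by simp only [mul_assoc]
      _ = x * y := by rw [mul_inv_mul, mul_inv_mul]
  have c2 : (y⁻¹ * x⁻¹) * (x * y) * (y⁻¹ * x⁻¹) = y⁻¹ * x⁻¹ := by
    calc (y⁻¹ * x⁻¹) * (x * y) * (y⁻¹ * x⁻¹) = y⁻¹ * ((x⁻¹ * x) * (y * y⁻¹)) * x⁻¹ := by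
          simp only [mul_assoc]
      _ = y⁻¹ * ((y * y⁻¹) * (x⁻¹ * x)) * x⁻¹ := by rw [comm]
      _ = (y⁻¹ * y * y⁻¹) * (x⁻¹ * x * x⁻¹) := by simp only [mul_assoc]
      _ = y⁻¹ * x⁻¹ := by rw [inv_mul_inv, inv_mul_inv]
  exact (inv_unique _ _ c1 c2).symm


/-- Option multiplication with `none` as unit. -/
def oMul : Option S → Option S → Option S
  | none, b => b
  | some a, none => some a
  | some a, some b => some (a * b)

variable {ι ι' : Type v}

lemma foldl_shift (ρ : ι → S) (l : List ι) (x y : S) :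
    l.foldl (fun s i => s * ρ i) (x * y) = x * l.foldl (fun s i => s * ρ i) y := by
  induction l generalizing y with
  | nil => rfl
  | cons a t ih =>
    simp only [List.foldl_cons]
    rw [mul_assoc]
    exact ih (y * ρ a)

lemma wEval_append (ρ : ι → S) (l₁ l₂ : List ι) :
    wEval (· * ·) ρ (l₁ ++ l₂) = oMul (wEval (· * ·) ρ l₁) (wEval (· * ·) ρ l₂) := by
  cases l₁ with
  | nil => simp [wEval, oMul]
  | cons a t =>
    cases l₂ with
    | nil => simp [wEval, oMul]
    | cons b t₂ =>
      show some ((t ++ b :: t₂).foldl (fun s i => s * ρ i) (ρ a)) =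
        some (t.foldl (fun s i => s * ρ i) (ρ a) * (t₂.foldl (fun s i => s * ρ i) (ρ b)))
      rw [List.foldl_append, List.foldl_cons, foldl_shift]

lemma wEval_map (ρ : ι' → S) (f : ι → ι') (l : List ι) :
    wEval (· * ·) ρ (l.map f) = wEval (· * ·) (ρ ∘ f) l := by
  cases l with
  | nil => rfl
  | cons a t =>
    simp only [List.map_cons, wEval, List.foldl_map]
    rfl

lemma foldl_congr' (ρ ρ' : ι → S) (t : List ι) (hρ : ∀ i ∈ t, ρ i = ρ' i) (x : S) :
    t.foldl (fun s i => s * ρ i) x = t.foldl (fun s i => s * ρ' i) x := by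
  induction t generalizing x with
  | nil => rfl
  | cons a u ih =>
    simp only [List.foldl_cons]
    rw [hρ a List.mem_cons_self]
    exact ih (fun i hi => hρ i (List.mem_cons_of_mem a hi)) _

lemma wEval_congr {ρ ρ' : ι → S} {l : List ι} (hρ : ∀ i ∈ l, ρ i = ρ' i) :
    wEval (· * ·) ρ l = wEval (· * ·) ρ' l := by
  cases l with
  | nil => rfl
  | cons a t =>
    simp only [wEval]
    rw [hρ a List.mem_cons_self,
      foldl_congr' ρ ρ' t (fun i hi => hρ i (List.mem_cons_of_mem a hi))]

lemma wEval_some {ρ : ι → S} {l : List ι} (hl : l ≠ []) :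
    ∃ s, wEval (· * ·) ρ l = some s := by
  cases l with
  | nil => exact absurd rfl hl
  | cons a t => exact ⟨_, rfl⟩

lemma wEval_inv_rev (γ : ι → S) (l : List ι) :
    wEval (· * ·) (fun i => (γ i)⁻¹) l = Option.map (·⁻¹) (wEval (· * ·) γ l.reverse) := by
  induction l with
  | nil => rfl
  | cons a t ih =>
    rw [List.reverse_cons]
    rw [show (a :: t) = [a] ++ t from rfl]
    rw [wEval_append, wEval_append, ih]
    cases hE : wEval (· * ·) γ t.reverse with
    | none => simp [oMul, wEval]
    | some s => simp [oMul, wEval, mul_inv_rev']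

/-- Letter assignment induced by a variable assignment. -/
def lrho (ρ : List ℕ → S) : List ℕ × Bool → S :=
  fun p => if p.2 then (ρ p.1)⁻¹ else ρ p.1

lemma letterEval_eq (ρ : List ℕ → S) (w : List (List ℕ × Bool)) :
    letterEval (· * ·) (·⁻¹) ρ w = wEval (· * ·) (lrho ρ) w := by
  cases w <;> rfl

lemma lrho_flip (ρ : List ℕ → S) (p : List ℕ × Bool) :
    lrho ρ (p.1, !p.2) = (lrho ρ p)⁻¹ := by
  obtain ⟨v, b⟩ := p
  cases b <;> simp [lrho, inv_invIS]

lemma letterEval_invFree (ρ : List ℕ → S) (w : List (List ℕ × Bool)) :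
    letterEval (· * ·) (·⁻¹) ρ (invFree w) =
      Option.map (·⁻¹) (letterEval (· * ·) (·⁻¹) ρ w) := by
  rw [letterEval_eq, letterEval_eq, invFree, wEval_map,
    show (lrho ρ) ∘ (fun p : List ℕ × Bool => (p.1, !p.2)) = fun p => (lrho ρ p)⁻¹ from
      funext (lrho_flip ρ), wEval_inv_rev, List.reverse_reverse]

lemma wEval_flatten_map (ρ : ι' → S) (β : ι → S) (g : ι → List ι') (l : List ι)
    (hg : ∀ j ∈ l, wEval (· * ·) ρ (g j) = some (β j)) :
    wEval (· * ·) ρ ((l.map g).flatten) = wEval (· * ·) β l := by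
  induction l with
  | nil => rfl
  | cons a t ih =>
    rw [List.map_cons, List.flatten_cons, wEval_append, hg a List.mem_cons_self,
      ih (fun j hj => hg j (List.mem_cons_of_mem a hj)),
      show (a :: t) = [a] ++ t from rfl, wEval_append]
    rfl

lemma range_reverse_eq (n : ℕ) :
    (List.range n).reverse = (List.range n).map (fun i => n - 1 - i) := by
  apply List.ext_getElem
  · simp
  · intro i h1 h2
    simp only [List.getElem_reverse, List.getElem_range, List.getElem_map, List.length_range,
      List.length_reverse] at *


open InverseSemigroup in
lemma core (n m : ℕ) (hn : 1 ≤ n) (hm : 1 ≤ m) (β : ℕ → S)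
    (hβ : ∀ i, i < n → β (n + i) = (β i)⁻¹) (p c : S)
    (hp : wEval (· * ·) β (List.range n) = some p)
    (hc : wEval (· * ·) β (List.range n).reverse = some c) :
    wEval (· * ·) β (uWord n n m) = some (p * c⁻¹) := by
  have hmap : wEval (· * ·) β ((List.range n).map (n + ·)) = some c⁻¹ := by
    rw [wEval_map]
    have h' : wEval (· * ·) (β ∘ (n + ·)) (List.range n)
        = wEval (· * ·) (fun i => (β i)⁻¹) (List.range n) :=
      wEval_congr (fun i hi => hβ i (List.mem_range.mp hi))
    rw [h', wEval_inv_rev, hc]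
    rfl
  have hr' : wEval (· * ·) β (List.range' n n) = some c⁻¹ := by
    rw [List.range'_eq_map_range]; exact hmap
  have hQ : wEval (· * ·) β ((List.range n).reverse ++ List.range' n n) = some (c * c⁻¹) := by
    rw [wEval_append, hc, hr']; rfl
  have hqq : (c * c⁻¹) * (c * c⁻¹) = c * c⁻¹ := by
    rw [← mul_assoc, mul_inv_mul]
  have hrep : ∀ k : ℕ, wEval (· * ·) β
      (List.replicate (k + 1) ((List.range n).reverse ++ List.range' n n)).flatten
      = some (c * c⁻¹) := by
    intro k
    induction k with
    | zero => simpa using hQ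
    | succ k ih =>
      rw [List.replicate_succ, List.flatten_cons, wEval_append, hQ, ih]
      show some _ = some _
      rw [hqq]
  obtain ⟨k, hk⟩ : ∃ k, 2 * m - 1 = k + 1 := ⟨2 * m - 2, by omega⟩
  rw [uWord, wEval_append, List.range_add, wEval_append, hp, hmap, hk, hrep k]
  show some ((p * c⁻¹) * (c * c⁻¹)) = some (p * c⁻¹)
  rw [mul_assoc, ← mul_assoc c⁻¹, inv_mul_inv]

/-- The assignment on `{0,…,2n-1}` induced by `Bf` (slots `n+i` get inverses). -/
def betaOf (n : ℕ) (Bf : ℕ → S) : ℕ → S :=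
  fun j => if j < n then Bf j else (Bf (j - n))⁻¹

/-- The reversed version of `betaOf`. -/
def betaOf' (n : ℕ) (Bf : ℕ → S) : ℕ → S :=
  fun j => if j < n then Bf (n - 1 - j) else (Bf (n - 1 - (j - n)))⁻¹

lemma sub (n m : ℕ) (hn : 1 ≤ n) (hm : 1 ≤ m) (Bf : ℕ → S) :
    ∃ p c : S,
      wEval (· * ·) (betaOf n Bf) (uWord n n m) = some (p * c⁻¹) ∧
      wEval (· * ·) (betaOf' n Bf) (uWord n n m) = some (p * c⁻¹)⁻¹ ∧
      wEval (· * ·) Bf (List.range n) = some p ∧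
      wEval (· * ·) (fun j => (Bf j)⁻¹) (List.range n) = some c⁻¹ := by
  have hrange : (List.range n) ≠ [] := by
    simp only [ne_eq, List.range_eq_nil]; omega
  have hrangerev : (List.range n).reverse ≠ [] := by
    simpa using hrange
  obtain ⟨p, hp⟩ := wEval_some (ρ := Bf) (S := S) hrange
  obtain ⟨c, hcrev⟩ := wEval_some (ρ := Bf) (S := S) hrangerev
  have hβp : wEval (· * ·) (betaOf n Bf) (List.range n) = some p := by
    rw [wEval_congr (ρ' := Bf) (fun i hi => by
      simp [betaOf, List.mem_range.mp hi])]
    exact hp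
  have hβc : wEval (· * ·) (betaOf n Bf) (List.range n).reverse = some c := by
    rw [wEval_congr (ρ' := Bf) (fun i hi => by
      simp [betaOf, List.mem_range.mp (List.mem_reverse.mp hi)])]
    exact hcrev
  have hmaprev : wEval (· * ·) (Bf ∘ (fun i => n - 1 - i)) (List.range n) = some c := by
    rw [← wEval_map, ← range_reverse_eq]
    exact hcrev
  have hβ'c : wEval (· * ·) (betaOf' n Bf) (List.range n) = some c := by
    rw [wEval_congr (ρ' := Bf ∘ (fun i => n - 1 - i)) (fun i hi => by
      simp [betaOf', List.mem_range.mp hi])]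
    exact hmaprev
  have hβ'p : wEval (· * ·) (betaOf' n Bf) (List.range n).reverse = some p := by
    rw [wEval_congr (ρ' := Bf ∘ (fun i => n - 1 - i)) (fun i hi => by
      simp [betaOf', List.mem_range.mp (List.mem_reverse.mp hi)])]
    rw [← wEval_map, List.map_reverse, ← range_reverse_eq, List.reverse_reverse]
    exact hp
  have hβ : ∀ i, i < n → betaOf n Bf (n + i) = (betaOf n Bf i)⁻¹ := by
    intro i hi
    have h1 : n + i - n = i := by omega
    simp only [betaOf]
    rw [if_neg (by omega), if_pos hi, h1]
  have hβ' : ∀ i, i < n → betaOf' n Bf (n + i) = (betaOf' n Bf i)⁻¹ := by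
    intro i hi
    have h1 : n + i - n = i := by omega
    simp only [betaOf']
    rw [if_neg (by omega), if_pos hi, h1]
  refine ⟨p, c, core n m hn hm _ hβ p c hβp hβc, ?_, hp, ?_⟩
  · rw [show (p * c⁻¹)⁻¹ = c * p⁻¹ by rw [mul_inv_rev', inv_invIS]]
    exact core n m hn hm _ hβ' c p hβ'c hβ'p
  · rw [wEval_inv_rev, hcrev]
    rfl

lemma key (n m : ℕ) (hn : 1 ≤ n) (hm : 1 ≤ m) :
    ∀ h : ℕ, ∀ σ : List ℕ → S, ∃ ρ ρ' : List ℕ → S, ∃ s : S,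
      wEval (· * ·) ρ (vWord n m (h + 1)) = some s ∧
      wEval (· * ·) ρ' (vWord n m (h + 1)) = some s⁻¹ ∧
      letterEval (· * ·) (·⁻¹) σ (wLetters n (h + 1)) = some s := by
  intro h
  induction h with
  | zero =>
    intro σ
    obtain ⟨p, c, hu, hu', hBp, hBc⟩ := sub n m hn hm (fun i => σ [i])
    refine ⟨fun xs => betaOf n (fun i => σ [i]) xs.headI,
      fun xs => betaOf' n (fun i => σ [i]) xs.headI, p * c⁻¹, ?_, ?_, ?_⟩
    · show wEval (· * ·) _ (vWord n m 1) = _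
      rw [show vWord n m 1 = (uWord n n m).map (fun i => [i]) from rfl, wEval_map]
      exact hu
    · show wEval (· * ·) _ (vWord n m 1) = _
      rw [show vWord n m 1 = (uWord n n m).map (fun i => [i]) from rfl, wEval_map]
      exact hu'
    · show letterEval (· * ·) (·⁻¹) σ (wLetters n 1) = _
      rw [letterEval_eq,
        show wLetters n 1 = (List.range n).map (fun i => (([i] : List ℕ), false))
          ++ (List.range n).map (fun i => (([i] : List ℕ), true)) from rfl,
        wEval_append, wEval_map, wEval_map]
      have e1 : (lrho σ) ∘ (fun i : ℕ => (([i] : List ℕ), false)) = fun i : ℕ => σ [i] := by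
        funext i; simp [lrho]
      have e2 : (lrho σ) ∘ (fun i : ℕ => (([i] : List ℕ), true)) = fun i : ℕ => (σ [i])⁻¹ := by
        funext i; simp [lrho]
      rw [e1, e2, hBp, hBc]
      rfl
  | succ h ih =>
    intro σ
    choose ρf ρ'f Bf h1 h2 h3 using fun j : ℕ => ih (fun xs => σ (xs ++ [j]))
    obtain ⟨p, c, hu, hu', hBp, hBc⟩ := sub n m hn hm Bf
    refine ⟨fun ys => if ys.getLastD 0 < n then ρf (ys.getLastD 0) ys.dropLast
        else ρ'f (ys.getLastD 0 - n) ys.dropLast,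
      fun ys => if ys.getLastD 0 < n then ρf (n - 1 - ys.getLastD 0) ys.dropLast
        else ρ'f (n - 1 - (ys.getLastD 0 - n)) ys.dropLast,
      p * c⁻¹, ?_, ?_, ?_⟩
    · show wEval (· * ·) _ (vWord n m (h + 2)) = _
      rw [show vWord n m (h + 2)
            = (uWord n n m).flatMap (fun j => (vWord n m (h + 1)).map (fun xs => xs ++ [j]))
          from rfl, List.flatMap_def]
      rw [wEval_flatten_map _ (betaOf n Bf) _ _ ?_]
      · exact hu
      · intro j hj
        rw [wEval_map]
        by_cases hjn : j < n
        · rw [wEval_congr (ρ' := ρf j) (fun xs _ => by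
            simp [Function.comp, List.getLastD_concat, List.dropLast_concat, hjn]), h1 j]
          simp [betaOf, hjn]
        · rw [wEval_congr (ρ' := ρ'f (j - n)) (fun xs _ => by
            simp [Function.comp, List.getLastD_concat, List.dropLast_concat, hjn]), h2 (j - n)]
          simp [betaOf, hjn]
    · show wEval (· * ·) _ (vWord n m (h + 2)) = _
      rw [show vWord n m (h + 2)
            = (uWord n n m).flatMap (fun j => (vWord n m (h + 1)).map (fun xs => xs ++ [j]))
          from rfl, List.flatMap_def]
      rw [wEval_flatten_map _ (betaOf' n Bf) _ _ ?_]
      · exact hu'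
      · intro j hj
        rw [wEval_map]
        by_cases hjn : j < n
        · rw [wEval_congr (ρ' := ρf (n - 1 - j)) (fun xs _ => by
            simp [Function.comp, List.getLastD_concat, List.dropLast_concat, hjn]),
            h1 (n - 1 - j)]
          simp [betaOf', hjn]
        · rw [wEval_congr (ρ' := ρ'f (n - 1 - (j - n))) (fun xs _ => by
            simp [Function.comp, List.getLastD_concat, List.dropLast_concat, hjn]),
            h2 (n - 1 - (j - n))]
          simp [betaOf', hjn]
    · show letterEval (· * ·) (·⁻¹) σ (wLetters n (h + 2)) = _
      have hbl : ∀ j : ℕ, wEval (· * ·) (lrho σ)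
          ((wLetters n (h + 1)).map (fun p => (p.1 ++ [j], p.2))) = some (Bf j) := by
        intro j
        rw [wEval_map,
          show ((lrho σ) ∘ fun p : List ℕ × Bool => (p.1 ++ [j], p.2))
            = lrho (fun xs => σ (xs ++ [j])) from rfl,
          ← letterEval_eq]
        exact h3 j
      rw [letterEval_eq,
        show wLetters n (h + 2)
          = ((List.range n).map
              (fun j => (wLetters n (h + 1)).map (fun p => (p.1 ++ [j], p.2)))).flatten
            ++ ((List.range n).map
              (fun j => invFree ((wLetters n (h + 1)).map (fun p => (p.1 ++ [j], p.2))))).flatten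
          from rfl,
        wEval_append]
      rw [wEval_flatten_map _ Bf _ _ (fun j _ => hbl j)]
      rw [wEval_flatten_map _ (fun j => (Bf j)⁻¹) _ _ (fun j _ => by
        rw [← letterEval_eq, letterEval_invFree, letterEval_eq, hbl j]
        rfl)]
      rw [hBp, hBc]
      rfl

end ISAux

/-- For all `n, m, h ≥ 1`: if an inverse semigroup satisfies the semigroup
identity `v_{n,m}^{(h)} ≈ (v_{n,m}^{(h)})²`, then it satisfies the inverse semigroup identity
`w_n^{(h)} ≈ (w_n^{(h)})²`. -/
theorem w_identity_of_v_identity {S : Type u} [InverseSemigroup S] (n m h : ℕ)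
    (hn : 1 ≤ n) (hm : 1 ≤ m) (hh : 1 ≤ h)
    (hv : ∀ ρ : List ℕ → S,
      wEval (· * ·) ρ (vWord n m h) = wEval (· * ·) ρ (vWord n m h ++ vWord n m h)) :
    ∀ ρ : List ℕ → S,
      letterEval (· * ·) (·⁻¹) ρ (wLetters n h) =
        letterEval (· * ·) (·⁻¹) ρ (wLetters n h ++ wLetters n h) := by

  intro σ
  obtain ⟨h', rfl⟩ : ∃ h', h = h' + 1 := ⟨h - 1, by omega⟩
  obtain ⟨ρ, ρ', s, hρ, -, hw⟩ := ISAux.key n m hn hm h' σ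
  have hvv := hv ρ
  rw [hρ, ISAux.wEval_append, hρ] at hvv
  change some s = some (s * s) at hvv
  have hss : s = s * s := Option.some.inj hvv
  rw [ISAux.letterEval_eq] at hw
  rw [ISAux.letterEval_eq, ISAux.letterEval_eq, ISAux.wEval_append, hw]
  show some s = some (s * s)
  rw [← hss]
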